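/- Let h : (ℝ²,0) → (ℝ²,0) be a germ of homeomorphism admitting a lift to the blow-up of the origin, i.e. a germ of homeomorphism h_1 between neighbourhoods of the exceptional divisor E in B with h_1(E) = E and π ∘ h_1 = h ∘ π. Then for every nonconstant real analytic arc γ : (ℝ,0) → (ℝ²,0), the curve h ∘ γ admits a limit tangent direction in ℝP¹, i.e. lim_{t→0, t≠0} [h(γ(t))] ∈ ℝP¹ exists, where [p] denotes the line through 0 and p; and for any two nonconstant real analytic arcs γ_1, γ_2 at 0, the limit tangent directions of h ∘ γ_1 and h ∘ γ_2 coincide if and only if the limit tangent directions of γ_1 and γ_2 coincide. In particular, a homeomorphism germ which lifts to the blow-up of the origin preserves tangency of real analytic arcs (the first level of Theorem 5.1(a) of the paper on cascade blow-analytic homeomorphisms). -/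

import Mathlib

open Filter Topology

noncomputable instance : TopologicalSpace (Projectivization ℝ (ℝ × ℝ)) :=
  inferInstanceAs (TopologicalSpace (Quotient _))

/-- The blow-up `B = {((x,y), ℓ) ∈ ℝ² × ℝP¹ : (x,y) ∈ ℓ}` of `ℝ²` at the origin. -/
def BlowUp : Type :=
  {q : (ℝ × ℝ) × Projectivization ℝ (ℝ × ℝ) // q.1 ∈ q.2.submodule}

noncomputable instance : TopologicalSpace BlowUp :=
  inferInstanceAs (TopologicalSpace {q : (ℝ × ℝ) × Projectivization ℝ (ℝ × ℝ) // q.1 ∈ q.2.submodule})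

/-- The projection `π : B → ℝ²`. -/
def blowUpProj (q : BlowUp) : ℝ × ℝ := q.val.1

/-- The exceptional divisor `E = π⁻¹(0) ⊆ B`. -/
def blowUpE : Set BlowUp := {q | q.val.1 = 0}

/-- The line `[p] ∈ ℝP¹` through `0` and `p` (with a junk value at `p = 0`). -/
noncomputable def dir (p : ℝ × ℝ) : Projectivization ℝ (ℝ × ℝ) :=
  if h : p ≠ 0 then Projectivization.mk ℝ p h
  else Projectivization.mk ℝ (1, 0) (by simp)

lemma dir_eq (p : ℝ × ℝ) (hp : p ≠ 0) : dir p = Projectivization.mk ℝ p hp := dif_pos hp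

lemma dir_smul {c : ℝ} (hc : c ≠ 0) {p : ℝ × ℝ} (hp : p ≠ 0) : dir (c • p) = dir p := by
  rw [dir_eq _ (smul_ne_zero hc hp), dir_eq _ hp]
  exact (Projectivization.mk_eq_mk_iff' ℝ _ _ _ _).2 ⟨c, rfl⟩

/-- `dir` is continuous away from the origin. -/
lemma continuousOn_dir : ContinuousOn dir {p : ℝ × ℝ | p ≠ 0} := by
  rw [continuousOn_iff_continuous_restrict]
  have : Continuous fun x : {p : ℝ × ℝ // p ≠ 0} => Projectivization.mk' ℝ x :=
    continuous_quotient_mk'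
  refine this.congr fun x => ?_
  rw [Set.restrict_apply, dir_eq _ x.2]
  rfl

lemma continuousAt_dir {p : ℝ × ℝ} (hp : p ≠ 0) : ContinuousAt dir p :=
  continuousOn_dir.continuousAt (isOpen_ne.mem_nhds hp)

lemma mem_dir (p : ℝ × ℝ) : p ∈ (dir p).submodule := by
  by_cases hp : p ≠ 0
  · rw [dir_eq _ hp, Projectivization.submodule_mk]
    exact Submodule.mem_span_singleton_self p
  · push_neg at hp
    rw [hp]; exact Submodule.zero_mem _

/-- The square map `ℝP¹ → ℝ²` used to prove Hausdorffness. -/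
noncomputable def sqMap (v : ℝ × ℝ) : ℝ × ℝ :=
  (v.1 ^ 2 + v.2 ^ 2)⁻¹ • (v.1 ^ 2, v.1 * v.2)

lemma sqMap_norm_pos {v : ℝ × ℝ} (hv : v ≠ 0) : 0 < v.1 ^ 2 + v.2 ^ 2 := by
  rcases eq_or_ne v.1 0 with h1 | h1
  · have h2 : v.2 ≠ 0 := by
      intro h2; exact hv (Prod.ext h1 h2)
    positivity
  · positivity

lemma sqMap_smul (c : ℝ) {v : ℝ × ℝ} (hv : v ≠ 0) : sqMap (c • v) = sqMap v ∨ c = 0 := by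
  rcases eq_or_ne c 0 with hc | hc
  · exact Or.inr hc
  left
  have hN := (sqMap_norm_pos hv).ne'
  unfold sqMap
  have : ((c • v).1 ^ 2 + (c • v).2 ^ 2) = c ^ 2 * (v.1 ^ 2 + v.2 ^ 2) := by
    simp [Prod.smul_fst, Prod.smul_snd, smul_eq_mul]; ring
  rw [this]
  ext <;> simp [Prod.smul_fst, Prod.smul_snd, smul_eq_mul] <;> field_simp <;> ring

noncomputable def projSq : Projectivization ℝ (ℝ × ℝ) → ℝ × ℝ :=
  Quotient.lift (fun v : {v : ℝ × ℝ // v ≠ 0} => sqMap v.val)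
    (by
      rintro a b ⟨c, hc⟩
      have ha : a.val = (c : ℝ) • b.val := by rw [← hc]; rfl
      show sqMap a.val = sqMap b.val
      rw [ha]
      rcases sqMap_smul (c : ℝ) b.2 with h | h
      · exact h
      · exact absurd h c.ne_zero)

lemma projSq_mk (v : ℝ × ℝ) (hv : v ≠ 0) : projSq (Projectivization.mk ℝ v hv) = sqMap v := rfl

lemma continuous_projSq : Continuous projSq := by
  apply Continuous.quotient_lift
  have h1 : Continuous fun v : {v : ℝ × ℝ // v ≠ 0} => (v.val.1 ^ 2 + v.val.2 ^ 2 : ℝ) := by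
    fun_prop
  have h2 : ∀ v : {v : ℝ × ℝ // v ≠ 0}, (v.val.1 ^ 2 + v.val.2 ^ 2 : ℝ) ≠ 0 :=
    fun v => (sqMap_norm_pos v.2).ne'
  exact (h1.inv₀ h2).smul (by fun_prop)

lemma projSq_injective : Function.Injective projSq := by
  intro u w
  induction u using Projectivization.ind with | h v hv =>
  induction w using Projectivization.ind with | h w hw =>
  intro hvw
  rw [projSq_mk, projSq_mk] at hvw
  have hN := sqMap_norm_pos hv
  have hM := sqMap_norm_pos hw
  unfold sqMap at hvw
  have e1 : (v.1 ^ 2 + v.2 ^ 2)⁻¹ * v.1 ^ 2 = (w.1 ^ 2 + w.2 ^ 2)⁻¹ * w.1 ^ 2 :=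
    congrArg Prod.fst hvw
  have e2 : (v.1 ^ 2 + v.2 ^ 2)⁻¹ * (v.1 * v.2) = (w.1 ^ 2 + w.2 ^ 2)⁻¹ * (w.1 * w.2) :=
    congrArg Prod.snd hvw
  have h1 : v.1 ^ 2 * (w.1 ^ 2 + w.2 ^ 2) = w.1 ^ 2 * (v.1 ^ 2 + v.2 ^ 2) := by
    field_simp at e1; linarith
  have h2 : v.1 * v.2 * (w.1 ^ 2 + w.2 ^ 2) = w.1 * w.2 * (v.1 ^ 2 + v.2 ^ 2) := by
    field_simp at e2; linarith
  have hD : (v.1 * w.2 - v.2 * w.1) ^ 2 * ((w.1 ^ 2 + w.2 ^ 2) * (v.1 ^ 2 + v.2 ^ 2)) = 0 := by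
    linear_combination (w.2 ^ 2 * (v.1 ^ 2 + v.2 ^ 2) - w.1 ^ 2 * (v.1 ^ 2 + v.2 ^ 2)) * h1 -
      2 * w.1 * w.2 * (v.1 ^ 2 + v.2 ^ 2) * h2
  have hD0 : v.1 * w.2 = v.2 * w.1 := by
    by_contra hne
    exact (mul_ne_zero (pow_ne_zero 2 (sub_ne_zero.2 hne)) (mul_pos hM hN).ne') hD
  rw [Projectivization.mk_eq_mk_iff']
  rcases eq_or_ne w.1 0 with hw1 | hw1
  · have hw2 : w.2 ≠ 0 := fun h => hw (Prod.ext hw1 h)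
    have hv1 : v.1 = 0 := by
      have : v.1 * w.2 = 0 := by rw [hD0, hw1]; ring
      exact (mul_eq_zero.1 this).resolve_right hw2
    refine ⟨v.2 / w.2, Prod.ext ?_ ?_⟩
    · simp [Prod.smul_fst, smul_eq_mul, hw1, hv1]
    · simp [Prod.smul_snd, smul_eq_mul]
      field_simp
  · refine ⟨v.1 / w.1, Prod.ext ?_ ?_⟩
    · simp [Prod.smul_fst, smul_eq_mul]
      field_simp
    · simp [Prod.smul_snd, smul_eq_mul]
      field_simp
      linear_combination hD0

instance : T2Space (Projectivization ℝ (ℝ × ℝ)) :=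
  T2Space.of_injective_continuous projSq_injective continuous_projSq

lemma snd_eq_dir (q : BlowUp) (hq : q.val.1 ≠ 0) : q.val.2 = dir q.val.1 := by
  have hm := q.property
  rw [Projectivization.submodule_eq, Submodule.mem_span_singleton] at hm
  obtain ⟨a, ha⟩ := hm
  refine ((dir_eq _ hq).trans ?_).symm
  conv_rhs => rw [← Projectivization.mk_rep q.val.2]
  exact (Projectivization.mk_eq_mk_iff' ℝ _ _ _ _).2 ⟨a, ha⟩

lemma arc_dir_limit {γ : ℝ → ℝ × ℝ} (hγ : AnalyticAt ℝ γ 0) (h0 : γ 0 = 0)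
    (hne : ¬ ∀ᶠ t in 𝓝 (0 : ℝ), γ t = 0) :
    ∃ ℓ, Tendsto (fun t => dir (γ t)) (𝓝[≠] (0 : ℝ)) (𝓝 ℓ) ∧
      ∀ᶠ t in 𝓝[≠] (0 : ℝ), γ t ≠ 0 := by
  obtain ⟨n, g, hg, hg0, heq⟩ := hγ.exists_eventuallyEq_pow_smul_nonzero_iff.2 hne
  have hgne : ∀ᶠ t in 𝓝 (0 : ℝ), g t ≠ 0 := hg.continuousAt.eventually_ne hg0
  have hkey : ∀ᶠ t in 𝓝[≠] (0 : ℝ), dir (γ t) = dir (g t) ∧ γ t ≠ 0 := by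
    filter_upwards [nhdsWithin_le_nhds heq, nhdsWithin_le_nhds hgne,
      self_mem_nhdsWithin] with t h1 h2 h3
    have h3 : t ≠ 0 := h3
    have htn : (t - 0) ^ n ≠ 0 := pow_ne_zero _ (sub_ne_zero.2 h3)
    refine ⟨?_, ?_⟩
    · rw [h1, dir_smul htn h2]
    · rw [h1]; exact smul_ne_zero htn h2
  refine ⟨dir (g 0), ?_, hkey.mono fun t ht => ht.2⟩
  have hTg : Tendsto (fun t => dir (g t)) (𝓝[≠] (0 : ℝ)) (𝓝 (dir (g 0))) :=
    (((continuousAt_dir hg0).comp hg.continuousAt).tendsto).mono_left nhdsWithin_le_nhds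
  exact hTg.congr' (hkey.mono fun t ht => ht.1.symm)


/-- **Theorem 5.1(a), first level.**  Let `h : (ℝ²,0) → (ℝ²,0)` be a germ of homeomorphism
admitting a lift to the blow-up of the origin: a germ of homeomorphism `h₁` between
neighbourhoods of the exceptional divisor `E` in `B` with `h₁(E) = E` and `π ∘ h₁ = h ∘ π`.
Then for every nonconstant real analytic arc `γ` at `0`, the limit tangent direction
`lim_{t→0,t≠0} [h(γ(t))] ∈ ℝP¹` exists, and for any two nonconstant real analytic arcs
`γ₁, γ₂` at `0`, the limit tangent directions of `h ∘ γ₁` and `h ∘ γ₂` coincide if and only if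
those of `γ₁` and `γ₂` coincide: `h` preserves tangency of real analytic arcs. -/
theorem lift_to_blowup_preserves_tangency
    (h hinv : ℝ × ℝ → ℝ × ℝ) (U V : Set (ℝ × ℝ))
    (hU : IsOpen U) (hV : IsOpen V) (h0U : (0 : ℝ × ℝ) ∈ U) (h0V : (0 : ℝ × ℝ) ∈ V)
    (hh0 : h 0 = 0)
    (hhc : ContinuousOn h U) (hinvc : ContinuousOn hinv V)
    (hbij : Set.BijOn h U V)
    (hleft : ∀ x ∈ U, hinv (h x) = x) (hright : ∀ y ∈ V, h (hinv y) = y)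
    (h₁ : BlowUp → BlowUp) (W : Set BlowUp)
    (hW : IsOpen W) (hEW : blowUpE ⊆ W)
    (h₁c : ContinuousOn h₁ W) (h₁inj : Set.InjOn h₁ W)
    (h₁E : h₁ '' blowUpE = blowUpE)
    (hcomm : ∀ q ∈ W, blowUpProj (h₁ q) = h (blowUpProj q)) :
    ∀ γ₁ γ₂ : ℝ → ℝ × ℝ,
      AnalyticAt ℝ γ₁ 0 → γ₁ 0 = 0 → (¬ ∀ᶠ t in 𝓝 (0 : ℝ), γ₁ t = 0) →
      AnalyticAt ℝ γ₂ 0 → γ₂ 0 = 0 → (¬ ∀ᶠ t in 𝓝 (0 : ℝ), γ₂ t = 0) →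
      (∃ ℓ : Projectivization ℝ (ℝ × ℝ),
          Tendsto (fun t => dir (h (γ₁ t))) (𝓝[≠] (0 : ℝ)) (𝓝 ℓ)) ∧
      (∀ ℓ₁ ℓ₂ ℓ₁' ℓ₂' : Projectivization ℝ (ℝ × ℝ),
          Tendsto (fun t => dir (γ₁ t)) (𝓝[≠] (0 : ℝ)) (𝓝 ℓ₁) →
          Tendsto (fun t => dir (γ₂ t)) (𝓝[≠] (0 : ℝ)) (𝓝 ℓ₂) →
          Tendsto (fun t => dir (h (γ₁ t))) (𝓝[≠] (0 : ℝ)) (𝓝 ℓ₁') →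
          Tendsto (fun t => dir (h (γ₂ t))) (𝓝[≠] (0 : ℝ)) (𝓝 ℓ₂') →
          (ℓ₁' = ℓ₂' ↔ ℓ₁ = ℓ₂)) := by
  set e : Projectivization ℝ (ℝ × ℝ) → BlowUp :=
    fun ℓ => ⟨((0 : ℝ × ℝ), ℓ), Submodule.zero_mem _⟩ with he
  have heE : ∀ ℓ, e ℓ ∈ blowUpE := fun ℓ => rfl
  set Φ : Projectivization ℝ (ℝ × ℝ) → Projectivization ℝ (ℝ × ℝ) :=
    fun ℓ => (h₁ (e ℓ)).val.2 with hΦ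
  have hΦinj : Function.Injective Φ := by
    intro a b hab
    have haE : h₁ (e a) ∈ blowUpE := h₁E ▸ Set.mem_image_of_mem _ (heE a)
    have hbE : h₁ (e b) ∈ blowUpE := h₁E ▸ Set.mem_image_of_mem _ (heE b)
    have h12 : h₁ (e a) = h₁ (e b) :=
      Subtype.ext (Prod.ext ((haE : _ = _).trans (hbE : _ = _).symm) hab)
    have := h₁inj (hEW (heE a)) (hEW (heE b)) h12
    simpa [he] using congrArg (fun q : BlowUp => q.val.2) this
  have key : ∀ γ : ℝ → ℝ × ℝ, AnalyticAt ℝ γ 0 → γ 0 = 0 →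
      (¬ ∀ᶠ t in 𝓝 (0 : ℝ), γ t = 0) →
      ∀ ℓ, Tendsto (fun t => dir (γ t)) (𝓝[≠] (0 : ℝ)) (𝓝 ℓ) →
      Tendsto (fun t => dir (h (γ t))) (𝓝[≠] (0 : ℝ)) (𝓝 (Φ ℓ)) := by
    intro γ hγ h0 hne ℓ hT
    obtain ⟨ℓ₀, hT₀, hγne⟩ := arc_dir_limit hγ h0 hne
    have hγ0 : Tendsto γ (𝓝[≠] (0 : ℝ)) (𝓝 (0 : ℝ × ℝ)) := by
      have := hγ.continuousAt.tendsto
      rw [h0] at this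
      exact this.mono_left nhdsWithin_le_nhds
    set L : (ℝ × ℝ) → BlowUp := fun p => ⟨(p, dir p), mem_dir p⟩ with hLdef
    have hLt : Tendsto (fun t => L (γ t)) (𝓝[≠] (0 : ℝ)) (𝓝 (e ℓ)) := by
      refine (Topology.IsEmbedding.subtypeVal (p := fun q : (ℝ × ℝ) × Projectivization ℝ (ℝ × ℝ) => q.1 ∈ q.2.submodule)).tendsto_nhds_iff.2 ?_
      exact hγ0.prodMk_nhds hT
    have heW : e ℓ ∈ W := hEW (heE ℓ)
    have hWev : ∀ᶠ t in 𝓝[≠] (0 : ℝ), L (γ t) ∈ W := hLt.eventually (hW.mem_nhds heW)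
    have hh₁t : Tendsto (fun t => h₁ (L (γ t))) (𝓝[≠] (0 : ℝ)) (𝓝 (h₁ (e ℓ))) :=
      ((h₁c.continuousAt (hW.mem_nhds heW)).tendsto).comp hLt
    have hsndc : Continuous (fun q : BlowUp => q.val.2) :=
      continuous_snd.comp continuous_subtype_val
    have hsnd : Tendsto (fun t => (h₁ (L (γ t))).val.2) (𝓝[≠] (0 : ℝ)) (𝓝 (Φ ℓ)) :=
      (hsndc.tendsto _).comp hh₁t
    have hγU : ∀ᶠ t in 𝓝[≠] (0 : ℝ), γ t ∈ U := hγ0.eventually (hU.mem_nhds h0U)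
    have hhne : ∀ᶠ t in 𝓝[≠] (0 : ℝ), h (γ t) ≠ 0 := by
      filter_upwards [hγU, hγne] with t h1 h2
      intro hc
      exact h2 (hbij.injOn h1 h0U (by rw [hc, hh0]))
    refine hsnd.congr' ?_
    filter_upwards [hWev, hhne] with t htW htne
    have hproj : (h₁ (L (γ t))).val.1 = h (γ t) := hcomm _ htW
    rw [snd_eq_dir _ (hproj ▸ htne), hproj]
  intro γ₁ γ₂ ha1 hz1 hn1 ha2 hz2 hn2
  obtain ⟨ℓ₁₀, hT₁, -⟩ := arc_dir_limit ha1 hz1 hn1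
  obtain ⟨ℓ₂₀, hT₂, -⟩ := arc_dir_limit ha2 hz2 hn2
  refine ⟨⟨Φ ℓ₁₀, key γ₁ ha1 hz1 hn1 ℓ₁₀ hT₁⟩, ?_⟩
  intro ℓ₁ ℓ₂ ℓ₁' ℓ₂' k1 k2 k1' k2'
  have e1 : ℓ₁ = ℓ₁₀ := tendsto_nhds_unique k1 hT₁
  have e2 : ℓ₂ = ℓ₂₀ := tendsto_nhds_unique k2 hT₂
  have e1' : ℓ₁' = Φ ℓ₁₀ := tendsto_nhds_unique k1' (key γ₁ ha1 hz1 hn1 ℓ₁₀ hT₁)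
  have e2' : ℓ₂' = Φ ℓ₂₀ := tendsto_nhds_unique k2' (key γ₂ ha2 hz2 hn2 ℓ₂₀ hT₂)
  subst e1 e2 e1' e2'
  exact ⟨fun hh => hΦinj hh, fun hh => congrArg Φ hh⟩
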